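/- Let G=(V,E) be a finite rooted tree and s ∈ {1,…,ξ}^V circuit requirements with ξ ≥ 1 an integer. Define N = { n ∈ ℕ^V : ∑_{v'∈Ā(v)} n_{v'} s_{v'} ≤ ξ for all v ∈ V }, and for v ∈ V and 0 ≤ σ ≤ ξ define M(σ,v) = { n ∈ ℕ^V : ∑_{v''∈Ā(v')} n_{v''} s_{v''} ≤ σ for all v' ∈ V, and n_{v'} = 0 for all v' ∉ D̄(v) }. Then for ρ ∈ (0,∞)^V the partial sums c_v(σ) = ∑_{n∈M(σ,v)} ∏_{v'∈D̄(v)} ρ_{v'}^{n_{v'}}/n_{v'}! satisfy the recursion c_v(σ) = ∑_{ℓ=0}^{⌊σ/s_v⌋} (ρ_v^ℓ/ℓ!) · ∏_{v':(v,v')∈E} c_{v'}(σ − ℓ s_v), with c_v(σ) = ∑_{ℓ=0}^{⌊σ/s_v⌋} ρ_v^ℓ/ℓ! when v is a leaf. -/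

import Mathlib

open Finset

def ancestors {n : ℕ} [NeZero n] (par : Fin n → Fin n) (hpar : ∀ v, v ≠ 0 → par v < v) :
    Fin n → Finset (Fin n) :=
  fun v =>
    if h : v = 0 then ∅ else insert (par v) (ancestors par hpar (par v))
termination_by v => (v : ℕ)
decreasing_by exact hpar _ h

/-- `v` together with its strict ancestors. -/
def barA {n : ℕ} [NeZero n] (par : Fin n → Fin n) (hpar : ∀ v, v ≠ 0 → par v < v)
    (v : Fin n) : Finset (Fin n) :=
  insert v (ancestors par hpar v)

/-- `v` together with its descendants. -/
def barD {n : ℕ} [NeZero n] (par : Fin n → Fin n) (hpar : ∀ v, v ≠ 0 → par v < v)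
    (v : Fin n) : Finset (Fin n) :=
  Finset.univ.filter (fun w => v ∈ barA par hpar w)

/-- strict descendants of `v`. -/
def strictD {n : ℕ} [NeZero n] (par : Fin n → Fin n) (hpar : ∀ v, v ≠ 0 → par v < v)
    (v : Fin n) : Finset (Fin n) :=
  Finset.univ.filter (fun w => v ∈ ancestors par hpar w)

/-- children of `v`. -/
def children {n : ℕ} [NeZero n] (par : Fin n → Fin n) (v : Fin n) : Finset (Fin n) :=
  Finset.univ.filter (fun w => w ≠ 0 ∧ par w = v)

namespace KRaux

variable {n : ℕ} [NeZero n] (par : Fin n → Fin n) (hpar : ∀ v, v ≠ 0 → par v < v)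

theorem ancestors_eq_of_ne {v : Fin n} (h : v ≠ 0) :
    ancestors par hpar v = barA par hpar (par v) := by
  rw [ancestors, dif_neg h]; rfl

theorem ancestors_zero : ancestors par hpar (0 : Fin n) = ∅ := by
  rw [ancestors]; simp

theorem mem_barA_self (v : Fin n) : v ∈ barA par hpar v := mem_insert_self _ _

theorem le_of_mem_barA (v x : Fin n) (hx : x ∈ barA par hpar v) : x ≤ v := by
  rcases Finset.mem_insert.1 hx with rfl | hx'
  · exact le_refl _
  · by_cases h0 : v = 0
    · rw [h0, ancestors_zero] at hx'; exact absurd hx' (Finset.notMem_empty _)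
    · rw [ancestors_eq_of_ne par hpar h0] at hx'
      exact le_of_lt (lt_of_le_of_lt (le_of_mem_barA (par v) x hx') (hpar v h0))
termination_by (v : ℕ)
decreasing_by exact hpar _ h0

theorem barA_trans (v x : Fin n) (hx : x ∈ barA par hpar v) :
    barA par hpar x ⊆ barA par hpar v := by
  rcases Finset.mem_insert.1 hx with rfl | hx'
  · exact subset_refl _
  · by_cases h0 : v = 0
    · rw [h0, ancestors_zero] at hx'; exact absurd hx' (Finset.notMem_empty _)
    · rw [ancestors_eq_of_ne par hpar h0] at hx'
      refine (barA_trans (par v) x hx').trans ?_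
      intro z hz
      exact Finset.mem_insert_of_mem (by rw [ancestors_eq_of_ne par hpar h0]; exact hz)
termination_by (v : ℕ)
decreasing_by exact hpar _ h0

theorem barA_chain (v x y : Fin n) (hx : x ∈ barA par hpar v) (hy : y ∈ barA par hpar v) :
    x ∈ barA par hpar y ∨ y ∈ barA par hpar x := by
  rcases Finset.mem_insert.1 hx with rfl | hx'
  · exact Or.inr hy
  rcases Finset.mem_insert.1 hy with rfl | hy'
  · exact Or.inl hx
  by_cases h0 : v = 0
  · rw [h0, ancestors_zero] at hx'; exact absurd hx' (Finset.notMem_empty _)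
  · rw [ancestors_eq_of_ne par hpar h0] at hx' hy'
    exact barA_chain (par v) x y hx' hy'
termination_by (v : ℕ)
decreasing_by exact hpar _ h0

theorem eq_of_mem_barA_mem_barA {x y : Fin n} (h1 : x ∈ barA par hpar y)
    (h2 : y ∈ barA par hpar x) : x = y :=
  le_antisymm (le_of_mem_barA par hpar y x h1) (le_of_mem_barA par hpar x y h2)

theorem mem_barD_iff {v w : Fin n} : w ∈ barD par hpar v ↔ v ∈ barA par hpar w := by
  simp [barD]

theorem mem_children_iff {v c : Fin n} : c ∈ children par v ↔ c ≠ 0 ∧ par c = v := by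
  simp [children]

theorem mem_barA_par {c : Fin n} (h : c ≠ 0) : par c ∈ barA par hpar c := by
  rw [barA, ancestors_eq_of_ne par hpar h]
  exact Finset.mem_insert_of_mem (mem_barA_self par hpar _)

theorem exists_child (v w : Fin n) (hw : v ∈ barA par hpar w) (hne : w ≠ v) :
    ∃ c, c ∈ children par v ∧ w ∈ barD par hpar c := by
  have h0 : w ≠ 0 := by
    rintro rfl
    rw [barA, ancestors_zero] at hw
    simp only [LawfulSingleton.insert_empty_eq, Finset.mem_singleton] at hw
    exact hne hw.symm
  rw [barA, Finset.mem_insert, ancestors_eq_of_ne par hpar h0] at hw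
  rcases hw with rfl | hw
  · exact absurd rfl hne
  by_cases hpv : par w = v
  · exact ⟨w, (mem_children_iff par).2 ⟨h0, hpv⟩, (mem_barD_iff par hpar).2 (mem_barA_self par hpar w)⟩
  · obtain ⟨c, hc, hwc⟩ := exists_child v (par w) hw (fun h => hpv h)
    rw [mem_barD_iff] at hwc
    exact ⟨c, hc, (mem_barD_iff par hpar).2
      (barA_trans par hpar w (par w) (mem_barA_par par hpar h0) hwc)⟩
termination_by (w : ℕ)
decreasing_by exact hpar _ h0

/-- `barD v` minus `v` is the union of the `barD`s of the children of `v`. -/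
theorem barD_sdiff_eq (v : Fin n) :
    barD par hpar v \ {v} = (children par v).biUnion (fun c => barD par hpar c) := by
  ext w
  simp only [Finset.mem_sdiff, Finset.mem_singleton, Finset.mem_biUnion]
  constructor
  · rintro ⟨hw, hne⟩
    obtain ⟨c, hc, hwc⟩ := exists_child par hpar v w ((mem_barD_iff par hpar).1 hw) hne
    exact ⟨c, hc, hwc⟩
  · rintro ⟨c, hc, hwc⟩
    obtain ⟨hc0, hpc⟩ := (mem_children_iff par).1 hc
    rw [mem_barD_iff] at hwc ⊢
    have hvw : v ∈ barA par hpar w := by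
      subst hpc
      exact barA_trans par hpar w c hwc (mem_barA_par par hpar hc0)
    refine ⟨hvw, ?_⟩
    intro hwv
    have h1 : c ≤ w := le_of_mem_barA par hpar w c hwc
    have h2 : par c < c := hpar c hc0
    rw [hpc, ← hwv] at h2
    exact absurd h2 (not_lt.2 h1)

/-- Within one `barA w`, we can't meet two different child subtrees. -/
theorem barA_meets_one {v c₁ c₂ : Fin n} (h1 : c₁ ∈ children par v) (h2 : c₂ ∈ children par v)
    (hne : c₁ ≠ c₂) {w x y : Fin n} (hx : x ∈ barA par hpar w) (hy : y ∈ barA par hpar w)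
    (hxc : x ∈ barD par hpar c₁) (hyc : y ∈ barD par hpar c₂) : False := by
  rw [mem_barD_iff] at hxc hyc
  obtain ⟨h10, hp1⟩ := (mem_children_iff par).1 h1
  obtain ⟨h20, hp2⟩ := (mem_children_iff par).1 h2
  have key : ∀ a b : Fin n, a ≠ 0 → b ≠ 0 → par a = par b →
      a ∈ barA par hpar b → a = b := by
    intro a b ha hb hab hmem
    rcases Finset.mem_insert.1 hmem with h | h
    · exact h
    · rw [ancestors_eq_of_ne par hpar hb, ← hab] at h
      have h1 := le_of_mem_barA par hpar (par a) a h
      exact absurd (hpar a ha) (not_lt.2 h1)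
  have hboth : c₁ ∈ barA par hpar y ∨ c₂ ∈ barA par hpar x := by
    rcases barA_chain par hpar w x y hx hy with h | h
    · exact Or.inl (barA_trans par hpar y x h hxc)
    · exact Or.inr (barA_trans par hpar x y h hyc)
  rcases hboth with h | h
  · rcases barA_chain par hpar y c₁ c₂ h hyc with hh | hh
    · exact hne (key c₁ c₂ h10 h20 (hp1.trans hp2.symm) hh)
    · exact hne (key c₂ c₁ h20 h10 (hp2.trans hp1.symm) hh).symm
  · rcases barA_chain par hpar x c₁ c₂ hxc h with hh | hh
    · exact hne (key c₁ c₂ h10 h20 (hp1.trans hp2.symm) hh)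
    · exact hne (key c₂ c₁ h20 h10 (hp2.trans hp1.symm) hh).symm

/-- `barD c` for distinct children are disjoint. -/
theorem barD_children_disjoint {v c₁ c₂ : Fin n} (h1 : c₁ ∈ children par v)
    (h2 : c₂ ∈ children par v) (hne : c₁ ≠ c₂) :
    Disjoint (barD par hpar c₁) (barD par hpar c₂) := by
  rw [Finset.disjoint_left]
  intro x hx hx2
  exact barA_meets_one par hpar h1 h2 hne (mem_barA_self par hpar x) (mem_barA_self par hpar x) hx hx2

theorem barA_inter_barD_self (v : Fin n) {x : Fin n} (hx : x ∈ barA par hpar v)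
    (hx2 : x ∈ barD par hpar v) : x = v :=
  eq_of_mem_barA_mem_barA par hpar hx ((mem_barD_iff par hpar).1 hx2)



section Sums

variable (s : Fin n → ℕ) (ρ : Fin n → ℝ)

/-- the budget constraints -/
def okP (σ : ℕ) (m : Fin n → ℕ) : Prop :=
  ∀ w, ∑ x ∈ barA par hpar w, m x * s x ≤ σ

open Classical in
/-- finite version of the configuration set -/
noncomputable def Mset (σ : ℕ) (D : Finset (Fin n)) : Finset (Fin n → ℕ) :=
  (Fintype.piFinset fun _ => Finset.range (σ + 1)).filter
    (fun m => okP par hpar s σ m ∧ ∀ x, x ∉ D → m x = 0)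

/-- the weight -/
noncomputable def W (D : Finset (Fin n)) (m : Fin n → ℕ) : ℝ :=
  ∏ x ∈ D, ρ x ^ m x / ((m x).factorial : ℝ)

theorem mem_Mset_iff (hs1 : ∀ v, 1 ≤ s v) {σ : ℕ} {D : Finset (Fin n)} {m : Fin n → ℕ} :
    m ∈ Mset par hpar s σ D ↔ okP par hpar s σ m ∧ ∀ x, x ∉ D → m x = 0 := by
  classical
  rw [Mset, Finset.mem_filter]
  constructor
  · rintro ⟨-, h⟩; exact h
  · rintro ⟨hok, hsupp⟩
    refine ⟨?_, hok, hsupp⟩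
    rw [Fintype.mem_piFinset]
    intro x
    rw [Finset.mem_range, Nat.lt_succ_iff]
    have h1 : m x * s x ≤ σ := by
      refine le_trans ?_ (hok x)
      exact Finset.single_le_sum (f := fun y => m y * s y) (fun i _ => Nat.zero_le _)
        (mem_barA_self par hpar x)
    calc m x ≤ m x * s x := Nat.le_mul_of_pos_right _ (hs1 x)
    _ ≤ σ := h1

/-- sum over `barA w` vanishes if `m` is supported away from it -/
theorem sum_barA_eq_zero {m : Fin n → ℕ} {v w : Fin n} (hv : v ∉ barA par hpar w)
    (hsupp : ∀ x, x ∉ barD par hpar v → m x = 0) :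
    ∑ x ∈ barA par hpar w, m x * s x = 0 := by
  refine Finset.sum_eq_zero fun x hx => ?_
  have hmx : m x = 0 := by
    refine hsupp x fun hxD => hv ?_
    exact barA_trans par hpar w x hx ((mem_barD_iff par hpar).1 hxD)
  simp [hmx]

/-- Peeling the root of a subtree. -/
theorem peel (hs1 : ∀ v, 1 ≤ s v) (v : Fin n) (σ : ℕ) :
    ∑ m ∈ Mset par hpar s σ (barD par hpar v), W ρ (barD par hpar v) m
      = ∑ ℓ ∈ Finset.range (σ / s v + 1), ρ v ^ ℓ / (ℓ.factorial : ℝ) *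
          ∑ m ∈ Mset par hpar s (σ - ℓ * s v) (barD par hpar v \ {v}),
            W ρ (barD par hpar v \ {v}) m := by
  classical
  have hvD : v ∈ barD par hpar v := (mem_barD_iff par hpar).2 (mem_barA_self par hpar v)
  simp only [Finset.mul_sum]
  rw [← Finset.sum_sigma (Finset.range (σ / s v + 1))
    (fun ℓ => Mset par hpar s (σ - ℓ * s v) (barD par hpar v \ {v}))
    (fun p => ρ v ^ p.1 / (p.1.factorial : ℝ) * W ρ (barD par hpar v \ {v}) p.2)]
  refine Finset.sum_bij' (fun m _ => ⟨m v, Function.update m v 0⟩)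
    (fun p _ => Function.update p.2 v p.1) ?_ ?_ ?_ ?_ ?_
  · -- hi
    rintro m hm
    obtain ⟨hok, hsupp⟩ := (mem_Mset_iff par hpar s hs1).1 hm
    have hv : ∑ x ∈ barA par hpar v, m x * s x = m v * s v := by
      refine Finset.sum_eq_single_of_mem v (mem_barA_self par hpar v) fun x hx hxne => ?_
      have : m x = 0 := hsupp x fun hxD =>
        hxne (barA_inter_barD_self par hpar v hx hxD)
      simp [this]
    have hmv : m v * s v ≤ σ := hv ▸ hok v
    rw [Finset.mem_sigma]
    constructor
    · rw [Finset.mem_range, Nat.lt_succ_iff, Nat.le_div_iff_mul_le (hs1 v)]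
      exact hmv
    · rw [mem_Mset_iff par hpar s hs1]
      constructor
      · intro w
        by_cases hvw : v ∈ barA par hpar w
        · have hsplit : m v * s v + ∑ x ∈ (barA par hpar w).erase v, m x * s x
              = ∑ x ∈ barA par hpar w, m x * s x :=
            Finset.add_sum_erase _ (fun x => m x * s x) hvw
          have hupd : ∑ x ∈ barA par hpar w, Function.update m v 0 x * s x
              = ∑ x ∈ (barA par hpar w).erase v, m x * s x := by
            rw [← Finset.sum_erase (barA par hpar w)
              (f := fun x => Function.update m v 0 x * s x) (a := v) (by simp)]
            exact Finset.sum_congr rfl fun x hx => by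
              rw [Function.update_of_ne (Finset.ne_of_mem_erase hx)]
          rw [hupd]
          refine Nat.le_sub_of_add_le ?_
          rw [Nat.add_comm, hsplit]
          exact hok w
        · have : ∑ x ∈ barA par hpar w, Function.update m v 0 x * s x = 0 := by
            refine sum_barA_eq_zero par hpar s hvw fun x hxD => ?_
            by_cases hxv : x = v
            · subst hxv; simp
            · rw [Function.update_of_ne hxv]; exact hsupp x hxD
          rw [this]; exact Nat.zero_le _
      · intro x hx
        show Function.update m v 0 x = 0
        by_cases hxv : x = v
        · subst hxv; simp
        · rw [Function.update_of_ne hxv]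
          refine hsupp x fun hxD => hx ?_
          rw [Finset.mem_sdiff, Finset.mem_singleton]
          exact ⟨hxD, hxv⟩
  · -- hj
    rintro ⟨ℓ, m'⟩ hp
    dsimp only
    rw [Finset.mem_sigma] at hp
    obtain ⟨hℓ, hm'⟩ := hp
    rw [Finset.mem_range, Nat.lt_succ_iff, Nat.le_div_iff_mul_le (hs1 v)] at hℓ
    obtain ⟨hok, hsupp⟩ := (mem_Mset_iff par hpar s hs1).1 hm'
    rw [mem_Mset_iff par hpar s hs1]
    constructor
    · intro w
      by_cases hvw : v ∈ barA par hpar w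
      · have hsplit : Function.update m' v ℓ v * s v
            + ∑ x ∈ (barA par hpar w).erase v, Function.update m' v ℓ x * s x
            = ∑ x ∈ barA par hpar w, Function.update m' v ℓ x * s x :=
          Finset.add_sum_erase _ (fun x => Function.update m' v ℓ x * s x) hvw
        rw [← hsplit, Function.update_self]
        have h1 : ∑ x ∈ (barA par hpar w).erase v, Function.update m' v ℓ x * s x
            = ∑ x ∈ (barA par hpar w).erase v, m' x * s x :=
          Finset.sum_congr rfl fun x hx => by
            rw [Function.update_of_ne (Finset.ne_of_mem_erase hx)]
        rw [h1]
        have h2 : ∑ x ∈ (barA par hpar w).erase v, m' x * s x ≤ σ - ℓ * s v :=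
          le_trans (Finset.sum_le_sum_of_subset (Finset.erase_subset _ _)) (hok w)
        calc ℓ * s v + ∑ x ∈ (barA par hpar w).erase v, m' x * s x
            ≤ ℓ * s v + (σ - ℓ * s v) := Nat.add_le_add_left h2 _
        _ = σ := Nat.add_sub_cancel' hℓ
      · have : ∑ x ∈ barA par hpar w, Function.update m' v ℓ x * s x = 0 := by
          refine sum_barA_eq_zero par hpar s hvw fun x hxD => ?_
          have hxv : x ≠ v := fun h => hxD (h ▸ hvD)
          rw [Function.update_of_ne hxv]
          refine hsupp x ?_
          rw [Finset.mem_sdiff, Finset.mem_singleton]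
          exact fun h => hxD h.1
        rw [this]; exact Nat.zero_le _
    · intro x hxD
      have hxv : x ≠ v := fun h => hxD (h ▸ hvD)
      rw [Function.update_of_ne hxv]
      refine hsupp x ?_
      rw [Finset.mem_sdiff, Finset.mem_singleton]
      exact fun h => hxD h.1
  · -- left inverse
    intro m _
    dsimp only
    funext x
    by_cases hxv : x = v
    · subst hxv; simp
    · simp [Function.update_of_ne hxv]
  · -- right inverse
    rintro ⟨ℓ, m'⟩ hp
    dsimp only
    rw [Finset.mem_sigma] at hp
    obtain ⟨-, hm'⟩ := hp
    obtain ⟨-, hsupp⟩ := (mem_Mset_iff par hpar s hs1).1 hm'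
    have hm'v : m' v = 0 := by
      refine hsupp v ?_
      rw [Finset.mem_sdiff, Finset.mem_singleton]
      exact fun h => h.2 rfl
    have h1 : Function.update m' v ℓ v = ℓ := Function.update_self _ _ _
    have h2 : Function.update (Function.update m' v ℓ) v 0 = m' := by
      funext x
      by_cases hxv : x = v
      · subst hxv; simp [hm'v]
      · simp [Function.update_of_ne hxv]
    exact Sigma.ext h1 (heq_of_eq (by rw [h2]))
  · -- weights
    intro m hm
    dsimp only
    obtain ⟨-, hsupp⟩ := (mem_Mset_iff par hpar s hs1).1 hm
    rw [W, W, Finset.sdiff_singleton_eq_erase,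
      ← Finset.mul_prod_erase (barD par hpar v) _ hvD]
    congr 1
    refine Finset.prod_congr rfl fun x hx => ?_
    rw [Function.update_of_ne (Finset.ne_of_mem_erase hx)]


theorem Mset_empty (σ : ℕ) : Mset par hpar s σ (∅ : Finset (Fin n)) = {fun _ => 0} := by
  classical
  ext m
  rw [Mset, Finset.mem_filter, Finset.mem_singleton]
  constructor
  · rintro ⟨-, -, hsupp⟩
    funext x
    exact hsupp x (Finset.notMem_empty x)
  · rintro rfl
    refine ⟨?_, ?_, fun x _ => rfl⟩
    · rw [Fintype.mem_piFinset]
      intro x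
      simp
    · intro w
      simp [okP]

/-- Factorization over a family of pairwise-incomparable subtrees. -/
theorem factor (hs1 : ∀ v, 1 ≤ s v) (τ : ℕ) (v : Fin n) (C : Finset (Fin n))
    (hC : C ⊆ children par v) :
    ∑ m ∈ Mset par hpar s τ (C.biUnion (barD par hpar)),
        W ρ (C.biUnion (barD par hpar)) m
      = ∏ c ∈ C, ∑ m ∈ Mset par hpar s τ (barD par hpar c), W ρ (barD par hpar c) m := by
  classical
  induction C using Finset.induction_on with
  | empty =>
    rw [Finset.biUnion_empty, Mset_empty, Finset.sum_singleton, Finset.prod_empty, W,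
      Finset.prod_empty]
  | insert c C hc ih =>
    have hcC : c ∈ children par v := hC (Finset.mem_insert_self c C)
    have hCsub : C ⊆ children par v := fun x hx => hC (Finset.mem_insert_of_mem hx)
    -- disjointness of barD c with the rest
    have hdisj : Disjoint (barD par hpar c) (C.biUnion (barD par hpar)) := by
      rw [Finset.disjoint_biUnion_right]
      intro c' hc'
      exact barD_children_disjoint par hpar hcC (hCsub hc') (fun h => hc (h ▸ hc'))
    rw [Finset.prod_insert hc, ← ih hCsub, Finset.sum_mul_sum]
    rw [← Finset.sum_product']
    rw [Finset.biUnion_insert]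
    refine Finset.sum_bij'
      (fun m _ => (fun x => if x ∈ barD par hpar c then m x else 0,
                   fun x => if x ∈ barD par hpar c then 0 else m x))
      (fun p _ => fun x => p.1 x + p.2 x) ?_ ?_ ?_ ?_ ?_
    · -- hi
      intro m hm
      obtain ⟨hok, hsupp⟩ := (mem_Mset_iff par hpar s hs1).1 hm
      rw [Finset.mem_product]
      constructor
      · rw [mem_Mset_iff par hpar s hs1]
        refine ⟨fun w => le_trans (Finset.sum_le_sum fun x _ => ?_) (hok w), fun x hx => ?_⟩
        · show (if x ∈ barD par hpar c then m x else 0) * s x ≤ m x * s x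
          refine Nat.mul_le_mul_right _ ?_
          split <;> simp
        · show (if x ∈ barD par hpar c then m x else 0) = 0
          rw [if_neg hx]
      · rw [mem_Mset_iff par hpar s hs1]
        refine ⟨fun w => le_trans (Finset.sum_le_sum fun x _ => ?_) (hok w), fun x hx => ?_⟩
        · show (if x ∈ barD par hpar c then 0 else m x) * s x ≤ m x * s x
          refine Nat.mul_le_mul_right _ ?_
          split <;> simp
        · show (if x ∈ barD par hpar c then 0 else m x) = 0
          by_cases hxc : x ∈ barD par hpar c
          · rw [if_pos hxc]
          · rw [if_neg hxc]
            refine hsupp x fun hmem => ?_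
            rcases Finset.mem_union.1 hmem with h | h
            · exact hxc h
            · exact hx h
    · -- hj
      rintro ⟨m₁, m₂⟩ hp
      dsimp only
      rw [Finset.mem_product] at hp
      obtain ⟨h1, h2⟩ := hp
      dsimp only at h1 h2
      obtain ⟨hok1, hsupp1⟩ := (mem_Mset_iff par hpar s hs1).1 h1
      obtain ⟨hok2, hsupp2⟩ := (mem_Mset_iff par hpar s hs1).1 h2
      rw [mem_Mset_iff par hpar s hs1]
      constructor
      · intro w
        have hsplit : ∑ x ∈ barA par hpar w, (m₁ x + m₂ x) * s x
            = (∑ x ∈ barA par hpar w, m₁ x * s x) + ∑ x ∈ barA par hpar w, m₂ x * s x := by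
          rw [← Finset.sum_add_distrib]
          exact Finset.sum_congr rfl fun x _ => add_mul _ _ _
        rw [hsplit]
        by_cases hz1 : ∑ x ∈ barA par hpar w, m₁ x * s x = 0
        · rw [hz1, Nat.zero_add]; exact hok2 w
        by_cases hz2 : ∑ x ∈ barA par hpar w, m₂ x * s x = 0
        · rw [hz2, Nat.add_zero]; exact hok1 w
        exfalso
        obtain ⟨x, hx, hmx⟩ : ∃ x ∈ barA par hpar w, m₁ x * s x ≠ 0 := by
          by_contra h
          push_neg at h
          exact hz1 (Finset.sum_eq_zero h)
        obtain ⟨y, hy, hmy⟩ : ∃ y ∈ barA par hpar w, m₂ y * s y ≠ 0 := by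
          by_contra h
          push_neg at h
          exact hz2 (Finset.sum_eq_zero h)
        have hxc : x ∈ barD par hpar c := by
          by_contra h
          exact hmx (by rw [hsupp1 x h, Nat.zero_mul])
        have hyC : y ∈ C.biUnion (barD par hpar) := by
          by_contra h
          exact hmy (by rw [hsupp2 y h, Nat.zero_mul])
        obtain ⟨c', hc', hyc'⟩ := Finset.mem_biUnion.1 hyC
        exact barA_meets_one par hpar hcC (hCsub hc') (fun h => hc (h ▸ hc')) hx hy hxc hyc'
      · intro x hx
        rw [Finset.mem_union] at hx
        push_neg at hx
        rw [hsupp1 x hx.1, hsupp2 x (fun h => hx.2 h), Nat.add_zero]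
    · -- left inverse
      intro m _
      dsimp only
      funext x
      by_cases hxc : x ∈ barD par hpar c
      · rw [if_pos hxc, if_pos hxc, Nat.add_zero]
      · rw [if_neg hxc, if_neg hxc, Nat.zero_add]
    · -- right inverse
      rintro ⟨m₁, m₂⟩ hp
      dsimp only
      rw [Finset.mem_product] at hp
      obtain ⟨h1, h2⟩ := hp
      dsimp only at h1 h2
      obtain ⟨-, hsupp1⟩ := (mem_Mset_iff par hpar s hs1).1 h1
      obtain ⟨-, hsupp2⟩ := (mem_Mset_iff par hpar s hs1).1 h2
      have key : ∀ x, x ∈ barD par hpar c → m₂ x = 0 := by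
        intro x hxc
        refine hsupp2 x fun hmem => ?_
        exact Finset.disjoint_left.1 hdisj hxc hmem
      refine Prod.ext ?_ ?_ <;> dsimp only <;> funext x <;> by_cases hxc : x ∈ barD par hpar c
      · rw [if_pos hxc, key x hxc, Nat.add_zero]
      · rw [if_neg hxc]
        exact (hsupp1 x hxc).symm
      · rw [if_pos hxc]
        exact (key x hxc).symm
      · rw [if_neg hxc, hsupp1 x hxc, Nat.zero_add]
    · -- weights
      intro m hm
      dsimp only
      obtain ⟨-, hsupp⟩ := (mem_Mset_iff par hpar s hs1).1 hm
      rw [W, Finset.prod_union hdisj, W, W]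
      congr 1
      · refine Finset.prod_congr rfl fun x hx => ?_
        rw [if_pos hx]
      · refine Finset.prod_congr rfl fun x hx => ?_
        rw [if_neg (Finset.disjoint_left.1 hdisj.symm hx)]

end Sums
end KRaux

/-- Kaufman–Roberts-type recursion for the streaming normalization constants: with
`c_v(σ) = ∑_{m ∈ M(σ,v)} ∏_{v' ∈ D̄(v)} ρ_{v'}^{m_{v'}}/m_{v'}!`, one has
`c_v(σ) = ∑_{ℓ=0}^{⌊σ/s_v⌋} (ρ_v^ℓ/ℓ!) ∏_{v' child of v} c_{v'}(σ - ℓ s_v)`,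
and `c_v(σ) = ∑_{ℓ=0}^{⌊σ/s_v⌋} ρ_v^ℓ/ℓ!` when `v` is a leaf. -/
theorem streaming_partial_sum_recursion {n : ℕ} [NeZero n] (par : Fin n → Fin n)
    (hpar : ∀ v, v ≠ 0 → par v < v) (ξ : ℕ) (hξ : 1 ≤ ξ) (s : Fin n → ℕ)
    (hs : ∀ v, 1 ≤ s v ∧ s v ≤ ξ) (ρ : Fin n → ℝ) (hρ : ∀ v, 0 < ρ v) :
    let c : Fin n → ℕ → ℝ := fun v σ =>
      ∑' m : Fin n → ℕ,
        if (∀ v', ∑ v'' ∈ barA par hpar v', m v'' * s v'' ≤ σ) ∧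
            (∀ v', v' ∉ barD par hpar v → m v' = 0)
          then ∏ v' ∈ barD par hpar v, ρ v' ^ m v' / ((m v').factorial : ℝ) else 0
    (∀ v : Fin n, ∀ σ ≤ ξ,
      c v σ = ∑ ℓ ∈ Finset.range (σ / s v + 1),
        ρ v ^ ℓ / (ℓ.factorial : ℝ) * ∏ v' ∈ children par v, c v' (σ - ℓ * s v)) ∧
    (∀ v : Fin n, ∀ σ ≤ ξ, children par v = ∅ →
      c v σ = ∑ ℓ ∈ Finset.range (σ / s v + 1), ρ v ^ ℓ / (ℓ.factorial : ℝ)) := by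

  intro c
  have hs1 : ∀ v, 1 ≤ s v := fun v => (hs v).1
  have hc : ∀ (v : Fin n) (σ : ℕ),
      c v σ = ∑ m ∈ KRaux.Mset par hpar s σ (barD par hpar v),
        KRaux.W ρ (barD par hpar v) m := by
    intro v σ
    show (∑' m : Fin n → ℕ, _) = _
    rw [tsum_eq_sum (s := KRaux.Mset par hpar s σ (barD par hpar v))
      (fun m hm => by
        rw [if_neg]
        intro hcond
        exact hm ((KRaux.mem_Mset_iff par hpar s hs1).2 hcond))]
    refine Finset.sum_congr rfl fun m hm => ?_
    obtain ⟨hok, hsupp⟩ := (KRaux.mem_Mset_iff par hpar s hs1).1 hm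
    rw [if_pos ⟨hok, hsupp⟩]
    rfl
  have hmain : ∀ (v : Fin n) (σ : ℕ),
      c v σ = ∑ ℓ ∈ Finset.range (σ / s v + 1),
        ρ v ^ ℓ / (ℓ.factorial : ℝ) * ∏ v' ∈ children par v, c v' (σ - ℓ * s v) := by
    intro v σ
    rw [hc v σ, KRaux.peel par hpar s ρ hs1 v σ]
    refine Finset.sum_congr rfl fun ℓ hℓ => ?_
    congr 1
    rw [KRaux.barD_sdiff_eq par hpar v,
      KRaux.factor par hpar s ρ hs1 (σ - ℓ * s v) v (children par v) (subset_refl _)]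
    exact Finset.prod_congr rfl fun c' _ => (hc c' (σ - ℓ * s v)).symm
  refine ⟨fun v σ _ => hmain v σ, fun v σ _ hleaf => ?_⟩
  rw [hmain v σ]
  simp [hleaf]
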